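/- Let 0 < β be a real number and let S and S₀ be C¹ survival functions on [0,β] with S(0) = S₀(0) = 1, with hazard rates λ(u) := −S'(u)/S(u) and λ₀(u) := −S₀'(u)/S₀(u). Then for every y ∈ [0,β], S(y) − S₀(y) = −S(y) · ∫₀^y (S₀(u)/S(u)) · (λ(u) − λ₀(u)) du. (Duhamel equation, continuous case, Theorem 6 of Gill–Johansen as used in the paper.) -/

import Mathlib

open Set intervalIntegral

/-- Duhamel equation, continuous case: for C¹ survival functions `S`, `S₀` on `[0,β]`
with `S 0 = S₀ 0 = 1` and hazard rates `λ = -S'/S`, `λ₀ = -S₀'/S₀`,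
`S y - S₀ y = -S y * ∫₀^y (S₀ u / S u) (λ u - λ₀ u) du`. -/
theorem duhamel_continuous
    (β : ℝ) (hβ : 0 < β)
    (S S' S₀ S₀' : ℝ → ℝ)
    (hS : ∀ y ∈ Icc (0:ℝ) β, HasDerivAt S (S' y) y)
    (hS' : ContinuousOn S' (Icc 0 β))
    (hSmono : AntitoneOn S (Icc 0 β))
    (hSpos : ∀ y ∈ Icc (0:ℝ) β, 0 < S y ∧ S y ≤ 1)
    (hS₀ : ∀ y ∈ Icc (0:ℝ) β, HasDerivAt S₀ (S₀' y) y)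
    (hS₀' : ContinuousOn S₀' (Icc 0 β))
    (hS₀mono : AntitoneOn S₀ (Icc 0 β))
    (hS₀pos : ∀ y ∈ Icc (0:ℝ) β, 0 < S₀ y ∧ S₀ y ≤ 1)
    (hS0 : S 0 = 1) (hS₀0 : S₀ 0 = 1) :
    ∀ y ∈ Icc (0:ℝ) β,
      S y - S₀ y
        = -(S y) * ∫ u in (0:ℝ)..y,
            (S₀ u / S u) * ((-(S' u) / S u) - (-(S₀' u) / S₀ u)) := by
  intro y hy
  have hy0 : (0:ℝ) ≤ y := hy.1
  have hsub : Icc (0:ℝ) y ⊆ Icc 0 β := Icc_subset_Icc le_rfl hy.2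
  have key : ∀ u ∈ Icc (0:ℝ) y,
      HasDerivAt (fun u => S₀ u / S u)
        ((S₀ u / S u) * ((-(S' u) / S u) - (-(S₀' u) / S₀ u))) u := by
    intro u hu
    have hu' := hsub hu
    have hSne : S u ≠ 0 := (hSpos u hu').1.ne'
    have hS₀ne : S₀ u ≠ 0 := (hS₀pos u hu').1.ne'
    have h := (hS₀ u hu').div (hS u hu') hSne
    have h : HasDerivAt (fun u => S₀ u / S u) ((S₀' u * S u - S₀ u * S' u) / S u ^ 2) u := h
    convert h using 1
    field_simp
    ring
  have hScont : ContinuousOn S (Icc 0 β) :=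
    fun x hx => (hS x hx).continuousAt.continuousWithinAt
  have hS₀cont : ContinuousOn S₀ (Icc 0 β) :=
    fun x hx => (hS₀ x hx).continuousAt.continuousWithinAt
  have hcont : ContinuousOn
      (fun u => (S₀ u / S u) * ((-(S' u) / S u) - (-(S₀' u) / S₀ u))) (Icc 0 y) := by
    apply ContinuousOn.mul
    · exact ((hS₀cont.mono hsub).div (hScont.mono hsub)
        fun u hu => (hSpos u (hsub hu)).1.ne')
    · exact (((hS'.mono hsub).neg.div (hScont.mono hsub)
        fun u hu => (hSpos u (hsub hu)).1.ne').sub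
        ((hS₀'.mono hsub).neg.div (hS₀cont.mono hsub)
        fun u hu => (hS₀pos u (hsub hu)).1.ne'))
  have hint : IntervalIntegrable
      (fun u => (S₀ u / S u) * ((-(S' u) / S u) - (-(S₀' u) / S₀ u))) MeasureTheory.volume 0 y :=
    hcont.intervalIntegrable_of_Icc hy0
  have hftc := intervalIntegral.integral_eq_sub_of_hasDerivAt
    (f := fun u => S₀ u / S u)
    (fun u hu => key u (by rwa [uIcc_of_le hy0] at hu)) hint
  rw [hftc]
  simp only [hS0, hS₀0]
  have hSy : (0:ℝ) < S y := (hSpos y hy).1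
  field_simp
  ring
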